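/- Let α be an assembly and τ ∈ ℕ⁺. Call a sequence of partitions of dom α a merge sequence if it starts with the partition of dom α into singletons, and each subsequent partition is obtained from the previous one by replacing two distinct parts C and C′, such that the total strength of interacting glues of α between positions in C and adjacent positions in C′ is at least τ, by their union C ∪ C′. Call a merge sequence maximal if no further such merge is possible from its final partition. Then the following are equivalent: (1) α is producible at temperature τ in the hierarchical model; (2) some merge sequence ends with the partition {dom α}; (3) every maximal merge sequence ends with the partition {dom α}. -/

import Mathlib

/-- A tile system over a type `T` of tile types: each tile type has, in each
direction (unit vector of `ℤ × ℤ`), a glue label (a natural number `ℕ`), and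
each glue label has a nonnegative integer strength given by `str`. -/
structure TileSystem (T : Type) where
  glue : T → ℤ × ℤ → ℕ
  str : ℕ → ℕ

/-- The four unit-vector directions of `ℤ²`. -/
def dirs : Finset (ℤ × ℤ) := {(0,1), (0,-1), (1,0), (-1,0)}

/-- An assembly: a partial function from `ℤ²` to tile types. -/
abbrev Assembly (T : Type) := ℤ × ℤ → Option T

/-- `D` is the domain of the assembly `α`. -/
def IsDom {T : Type} (α : Assembly T) (D : Finset (ℤ × ℤ)) : Prop :=
  ∀ p, (α p).isSome ↔ p ∈ D

/-- The strength of the bond between positions `p` and `q` in `α`: it is the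
strength of the common glue if `q - p` is a unit direction and the glue of the
tile at `p` in direction `q - p` matches the glue of the tile at `q` in
direction `p - q`; otherwise `0`. -/
def bond {T : Type} (ts : TileSystem T) (α : Assembly T) (p q : ℤ × ℤ) : ℕ :=
  match α p, α q with
  | some t, some t' =>
      if q - p ∈ dirs ∧ ts.glue t (q - p) = ts.glue t' (p - q)
      then ts.str (ts.glue t (q - p)) else 0
  | _, _ => 0

/-- Two positions of `α` interact if they hold tiles binding with positive strength. -/
def Interacts {T : Type} (ts : TileSystem T) (α : Assembly T) (p q : ℤ × ℤ) : Prop :=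
  0 < bond ts α p q

/-- Total strength of the interacting glues between positions in `A` and
(adjacent) positions in `B`. -/
def strengthBetween {T : Type} (ts : TileSystem T) (α : Assembly T)
    (A B : Finset (ℤ × ℤ)) : ℕ :=
  ∑ p ∈ A, ∑ q ∈ B, bond ts α p q

/-- `α` is `τ`-stable: every partition of its domain into two nonempty parts is
crossed by interacting glues of total strength at least `τ`. -/
def Stable {T : Type} (ts : TileSystem T) (α : Assembly T) (τ : ℕ) : Prop :=
  ∀ D A B : Finset (ℤ × ℤ), IsDom α D → A ∪ B = D → Disjoint A B →
    A.Nonempty → B.Nonempty → τ ≤ strengthBetween ts α A B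

/-- The union of two assemblies (agreeing with `α` wherever `α` is defined). -/
def aunion {T : Type} (α β : Assembly T) : Assembly T :=
  fun p => match α p with
    | some t => some t
    | none => β p

/-- Producibility in the hierarchical model at temperature `τ`: an assembly is
producible if it is a single tile, or the `τ`-stable union of two producible
assemblies with disjoint domains. -/
inductive Producible {T : Type} (ts : TileSystem T) (τ : ℕ) : Assembly T → Prop where
  | single (p : ℤ × ℤ) (t : T) :
      Producible ts τ (fun q => if q = p then some t else none)
  | union {α β : Assembly T} :
      Producible ts τ α → Producible ts τ β →
      (∀ p, α p = none ∨ β p = none) →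
      Stable ts (aunion α β) τ →
      Producible ts τ (aunion α β)

/-- Two assemblies are consistent if they agree wherever both are defined. -/
def Consistent {T : Type} (α β : Assembly T) : Prop :=
  ∀ p t t', α p = some t → β p = some t' → t = t'

/-- `α` is a subassembly of `β`. -/
def Subassembly {T : Type} (α β : Assembly T) : Prop :=
  ∀ p t, α p = some t → β p = some t

/-- A producible assembly is terminal if no producible assembly can stably attach to it. -/
def Terminal {T : Type} (ts : TileSystem T) (τ : ℕ) (α : Assembly T) : Prop :=
  ∀ β : Assembly T, Producible ts τ β → (∀ p, α p = none ∨ β p = none) →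
    ¬ Stable ts (aunion α β) τ

/-- The hierarchical system uniquely produces `α` if the set of producible
terminal assemblies equals `{α}`. -/
def UniquelyProduces {T : Type} (ts : TileSystem T) (τ : ℕ) (α : Assembly T) : Prop :=
  {γ : Assembly T | Producible ts τ γ ∧ Terminal ts τ γ} = {α}

/-- `𝒞` is a partition of the finite set `D`: pairwise disjoint nonempty parts
whose union is `D`. -/
def IsPartition (𝒞 : Finset (Finset (ℤ × ℤ))) (D : Finset (ℤ × ℤ)) : Prop :=
  (∀ C ∈ 𝒞, C.Nonempty) ∧
  (∀ C₁ ∈ 𝒞, ∀ C₂ ∈ 𝒞, C₁ ≠ C₂ → Disjoint C₁ C₂) ∧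
  𝒞.sup id = D

/-- One merge step on partitions of the domain of `α`: replace two distinct
parts whose attachment strength in `α` is at least `τ` by their union. -/
def MergeStep {T : Type} (ts : TileSystem T) (α : Assembly T) (τ : ℕ)
    (𝒞 𝒞' : Finset (Finset (ℤ × ℤ))) : Prop :=
  ∃ C₁ ∈ 𝒞, ∃ C₂ ∈ 𝒞, C₁ ≠ C₂ ∧ τ ≤ strengthBetween ts α C₁ C₂ ∧
    𝒞' = insert (C₁ ∪ C₂) ((𝒞.erase C₁).erase C₂)

/-- The partition of `D` into singletons. -/
def singletonsPart (D : Finset (ℤ × ℤ)) : Finset (Finset (ℤ × ℤ)) :=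
  D.image (fun p => {p})

/-- A merge sequence for `α` (with domain `D`) at temperature `τ`: a sequence of
partitions starting with the singleton partition, each subsequent one obtained
from the previous by a merge step. -/
def IsMergeSeq {T : Type} (ts : TileSystem T) (α : Assembly T) (τ : ℕ)
    (D : Finset (ℤ × ℤ)) (L : List (Finset (Finset (ℤ × ℤ)))) : Prop :=
  L.head? = some (singletonsPart D) ∧ L.Chain' (MergeStep ts α τ)


section MergeProofs

open Relation Finset

variable {T : Type} (ts : TileSystem T) (α : Assembly T) (τ : ℕ)

lemma neg_mem_dirs {d : ℤ × ℤ} (h : d ∈ dirs) : -d ∈ dirs := by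
  fin_cases h <;> decide

lemma sub_mem_dirs_comm {p q : ℤ × ℤ} : q - p ∈ dirs ↔ p - q ∈ dirs :=
  ⟨fun h => by simpa [neg_sub] using neg_mem_dirs h,
   fun h => by simpa [neg_sub] using neg_mem_dirs h⟩

lemma bond_symm (p q : ℤ × ℤ) : bond ts α p q = bond ts α q p := by
  unfold bond
  cases hp : α p with
  | none => cases hq : α q <;> rfl
  | some t =>
    cases hq : α q with
    | none => rfl
    | some t' =>
      show (if q - p ∈ dirs ∧ ts.glue t (q - p) = ts.glue t' (p - q)
              then ts.str (ts.glue t (q - p)) else 0) =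
           (if p - q ∈ dirs ∧ ts.glue t' (p - q) = ts.glue t (q - p)
              then ts.str (ts.glue t' (p - q)) else 0)
      by_cases h : q - p ∈ dirs ∧ ts.glue t (q - p) = ts.glue t' (p - q)
      · rw [if_pos h, if_pos ⟨sub_mem_dirs_comm.mp h.1, h.2.symm⟩, h.2]
      · rw [if_neg h, if_neg fun h' => h ⟨sub_mem_dirs_comm.mpr h'.1, h'.2.symm⟩]

lemma strengthBetween_comm (A B : Finset (ℤ × ℤ)) :
    strengthBetween ts α A B = strengthBetween ts α B A := by
  unfold strengthBetween
  rw [Finset.sum_comm]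
  exact Finset.sum_congr rfl fun q _ => Finset.sum_congr rfl fun p _ => bond_symm ts α p q

lemma strengthBetween_mono {A A' B B' : Finset (ℤ × ℤ)} (hA : A ⊆ A') (hB : B ⊆ B') :
    strengthBetween ts α A B ≤ strengthBetween ts α A' B' := by
  unfold strengthBetween
  refine le_trans (Finset.sum_le_sum fun p _ => Finset.sum_le_sum_of_subset hB) ?_
  exact Finset.sum_le_sum_of_subset hA

lemma bond_congr {β : Assembly T} {p q : ℤ × ℤ} (hp : α p = β p) (hq : α q = β q) :
    bond ts α p q = bond ts β p q := by unfold bond; rw [hp, hq]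

lemma strengthBetween_congr {β : Assembly T} {A B : Finset (ℤ × ℤ)}
    (h : ∀ p ∈ A ∪ B, α p = β p) :
    strengthBetween ts α A B = strengthBetween ts β A B :=
  Finset.sum_congr rfl fun p hp => Finset.sum_congr rfl fun q hq =>
    bond_congr ts α (h p (Finset.mem_union_left _ hp)) (h q (Finset.mem_union_right _ hq))

/-- Restriction of an assembly to a finite set of positions. -/
def restr (α : Assembly T) (C : Finset (ℤ × ℤ)) : Assembly T :=
  fun p => if p ∈ C then α p else none

lemma isDom_unique {β : Assembly T} {E F : Finset (ℤ × ℤ)}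
    (hE : IsDom β E) (hF : IsDom β F) : E = F :=
  Finset.ext fun p => (hE p).symm.trans (hF p)

lemma isDom_restr {D C : Finset (ℤ × ℤ)} (hD : IsDom α D) (hsub : C ⊆ D) :
    IsDom (restr α C) C := by
  intro p
  unfold restr
  by_cases hp : p ∈ C
  · simpa [hp] using (hD p).trans ⟨fun _ => hp, fun _ => hsub hp⟩
  · simp [hp]

lemma aunion_restr (C₁ C₂ : Finset (ℤ × ℤ)) :
    aunion (restr α C₁) (restr α C₂) = restr α (C₁ ∪ C₂) := by
  funext p
  unfold aunion restr
  by_cases h1 : p ∈ C₁ <;> by_cases h2 : p ∈ C₂ <;>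
    simp [h1, h2, Finset.mem_union] <;> cases α p <;> simp

lemma restr_disjoint {C₁ C₂ : Finset (ℤ × ℤ)} (h : Disjoint C₁ C₂) :
    ∀ p, restr α C₁ p = none ∨ restr α C₂ p = none := by
  intro p
  unfold restr
  by_cases h1 : p ∈ C₁
  · exact Or.inr (if_neg (Finset.disjoint_left.mp h h1))
  · exact Or.inl (if_neg h1)

lemma isDom_single (p : ℤ × ℤ) (t : T) :
    IsDom (fun q => if q = p then some t else none) {p} := by
  intro q
  by_cases hq : q = p <;> simp [hq]

lemma producible_stable {β : Assembly T} (h : Producible ts τ β) : Stable ts β τ := by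
  cases h with
  | single p t =>
    intro E A B hE hAB hd hA hB
    have hE' : E = {p} := isDom_unique hE (isDom_single p t)
    obtain ⟨a, ha⟩ := hA
    obtain ⟨b, hb⟩ := hB
    have ha' : a ∈ E := hAB ▸ Finset.mem_union_left _ ha
    have hb' : b ∈ E := hAB ▸ Finset.mem_union_right _ hb
    rw [hE', Finset.mem_singleton] at ha' hb'
    rw [ha'] at ha; rw [hb'] at hb
    exact absurd hb (Finset.disjoint_left.mp hd ha)
  | union _ _ _ hs => exact hs

lemma isDom_aunion {β γ : Assembly T} {Eβ Eγ : Finset (ℤ × ℤ)}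
    (hβ : IsDom β Eβ) (hγ : IsDom γ Eγ) :
    IsDom (aunion β γ) (Eβ ∪ Eγ) := by
  intro p
  unfold aunion
  cases hb : β p with
  | none =>
    have : ¬ p ∈ Eβ := by simp [← hβ p, hb]
    simp [Finset.mem_union, this, ← hγ p]
  | some t =>
    have : p ∈ Eβ := by simp [← hβ p, hb]
    simp [Finset.mem_union, this]

lemma stable_aunion {β γ : Assembly T} {Eβ Eγ : Finset (ℤ × ℤ)}
    (hβd : IsDom β Eβ) (hγd : IsDom γ Eγ)
    (hdis : ∀ p, β p = none ∨ γ p = none)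
    (hβ : Stable ts β τ) (hγ : Stable ts γ τ)
    (hstr : τ ≤ strengthBetween ts (aunion β γ) Eβ Eγ) :
    Stable ts (aunion β γ) τ := by
  intro E A B hE hAB hd hA hB
  have hE' : E = Eβ ∪ Eγ := isDom_unique hE (isDom_aunion hβd hγd)
  subst hE'
  have hagβ : ∀ p ∈ Eβ, aunion β γ p = β p := by
    intro p hp
    have : (β p).isSome := (hβd p).mpr hp
    obtain ⟨t, ht⟩ := Option.isSome_iff_exists.mp this
    unfold aunion; rw [ht]
  have hagγ : ∀ p ∈ Eγ, aunion β γ p = γ p := by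
    intro p hp
    have hg : (γ p).isSome := (hγd p).mpr hp
    rcases hdis p with hb | hb
    · unfold aunion; rw [hb]
    · rw [hb] at hg; simp at hg
  by_cases h1 : (A ∩ Eβ).Nonempty ∧ (B ∩ Eβ).Nonempty
  · have hun : (A ∩ Eβ) ∪ (B ∩ Eβ) = Eβ := by
      rw [← Finset.union_inter_distrib_right, hAB, Finset.union_inter_cancel_left]
    have hd' : Disjoint (A ∩ Eβ) (B ∩ Eβ) :=
      hd.mono Finset.inter_subset_left Finset.inter_subset_left
    have := hβ Eβ (A ∩ Eβ) (B ∩ Eβ) hβd hun hd' h1.1 h1.2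
    calc τ ≤ strengthBetween ts β (A ∩ Eβ) (B ∩ Eβ) := this
      _ = strengthBetween ts (aunion β γ) (A ∩ Eβ) (B ∩ Eβ) := by
          refine (strengthBetween_congr ts (aunion β γ) fun p hp => ?_).symm
          rcases Finset.mem_union.mp hp with h | h
          · exact hagβ p (Finset.mem_of_mem_inter_right h)
          · exact hagβ p (Finset.mem_of_mem_inter_right h)
      _ ≤ strengthBetween ts (aunion β γ) A B :=
          strengthBetween_mono ts _ Finset.inter_subset_left Finset.inter_subset_left
  · by_cases h2 : (A ∩ Eγ).Nonempty ∧ (B ∩ Eγ).Nonempty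
    · have hun : (A ∩ Eγ) ∪ (B ∩ Eγ) = Eγ := by
        rw [← Finset.union_inter_distrib_right, hAB, Finset.union_inter_cancel_right]
      have hd' : Disjoint (A ∩ Eγ) (B ∩ Eγ) :=
        hd.mono Finset.inter_subset_left Finset.inter_subset_left
      have := hγ Eγ (A ∩ Eγ) (B ∩ Eγ) hγd hun hd' h2.1 h2.2
      calc τ ≤ strengthBetween ts γ (A ∩ Eγ) (B ∩ Eγ) := this
        _ = strengthBetween ts (aunion β γ) (A ∩ Eγ) (B ∩ Eγ) := by
            refine (strengthBetween_congr ts (aunion β γ) fun p hp => ?_).symm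
            rcases Finset.mem_union.mp hp with h | h
            · exact hagγ p (Finset.mem_of_mem_inter_right h)
            · exact hagγ p (Finset.mem_of_mem_inter_right h)
        _ ≤ strengthBetween ts (aunion β γ) A B :=
            strengthBetween_mono ts _ Finset.inter_subset_left Finset.inter_subset_left
    · -- neither Eβ nor Eγ is split by (A, B)
      rw [not_and_or] at h1 h2
      rw [Finset.not_nonempty_iff_eq_empty, Finset.not_nonempty_iff_eq_empty] at h1 h2
      -- decompose A and B over Eβ, Eγ
      have hAdec : A = (A ∩ Eβ) ∪ (A ∩ Eγ) := by
        rw [← Finset.inter_union_distrib_left]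
        exact (Finset.inter_eq_left.mpr (hAB ▸ Finset.subset_union_left)).symm
      have hBdec : B = (B ∩ Eβ) ∪ (B ∩ Eγ) := by
        rw [← Finset.inter_union_distrib_left]
        exact (Finset.inter_eq_left.mpr (hAB ▸ Finset.subset_union_right)).symm
      rcases h1 with h1 | h1 <;> rcases h2 with h2 | h2
      · -- A ∩ Eβ = ∅, A ∩ Eγ = ∅ : A empty, contradiction
        exfalso
        rw [hAdec, h1, h2] at hA
        simp at hA
      · -- A ∩ Eβ = ∅, B ∩ Eγ = ∅ : Eβ ⊆ B, Eγ ⊆ A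
        have hEβB : Eβ ⊆ B := by
          intro q hq
          have hq' : q ∈ A ∪ B := hAB ▸ Finset.mem_union_left _ hq
          rcases Finset.mem_union.mp hq' with h | h
          · exact absurd (Finset.mem_inter.mpr ⟨h, hq⟩) (h1 ▸ Finset.notMem_empty q)
          · exact h
        have hEγA : Eγ ⊆ A := by
          intro q hq
          have hq' : q ∈ A ∪ B := hAB ▸ Finset.mem_union_right _ hq
          rcases Finset.mem_union.mp hq' with h | h
          · exact h
          · exact absurd (Finset.mem_inter.mpr ⟨h, hq⟩) (h2 ▸ Finset.notMem_empty q)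
        calc τ ≤ strengthBetween ts (aunion β γ) Eβ Eγ := hstr
          _ ≤ strengthBetween ts (aunion β γ) B A := strengthBetween_mono ts _ hEβB hEγA
          _ = strengthBetween ts (aunion β γ) A B := strengthBetween_comm ts _ B A
      · -- B ∩ Eβ = ∅, A ∩ Eγ = ∅ : Eβ ⊆ A, Eγ ⊆ B
        have hEβA : Eβ ⊆ A := by
          intro q hq
          have hq' : q ∈ A ∪ B := hAB ▸ Finset.mem_union_left _ hq
          rcases Finset.mem_union.mp hq' with h | h
          · exact h
          · exact absurd (Finset.mem_inter.mpr ⟨h, hq⟩) (h1 ▸ Finset.notMem_empty q)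
        have hEγB : Eγ ⊆ B := by
          intro q hq
          have hq' : q ∈ A ∪ B := hAB ▸ Finset.mem_union_right _ hq
          rcases Finset.mem_union.mp hq' with h | h
          · exact absurd (Finset.mem_inter.mpr ⟨h, hq⟩) (h2 ▸ Finset.notMem_empty q)
          · exact h
        calc τ ≤ strengthBetween ts (aunion β γ) Eβ Eγ := hstr
          _ ≤ strengthBetween ts (aunion β γ) A B := strengthBetween_mono ts _ hEβA hEγB
      · -- B ∩ Eβ = ∅, B ∩ Eγ = ∅ : B empty, contradiction
        exfalso
        rw [hBdec, h1, h2] at hB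
        simp at hB

/-- Abbreviation for the result of a merge. -/
def mop (C₁ C₂ : Finset (ℤ × ℤ)) (𝒞 : Finset (Finset (ℤ × ℤ))) : Finset (Finset (ℤ × ℤ)) :=
  insert (C₁ ∪ C₂) ((𝒞.erase C₁).erase C₂)

lemma mop_swap (C₁ C₂ : Finset (ℤ × ℤ)) (𝒞 : Finset (Finset (ℤ × ℤ))) :
    mop C₁ C₂ 𝒞 = mop C₂ C₁ 𝒞 := by
  unfold mop
  rw [Finset.union_comm]
  congr 1
  ext x
  simp only [Finset.mem_erase]
  tauto

lemma part_subset {𝒞 : Finset (Finset (ℤ × ℤ))} {D C : Finset (ℤ × ℤ)}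
    (hpart : IsPartition 𝒞 D) (hC : C ∈ 𝒞) : C ⊆ D :=
  hpart.2.2 ▸ Finset.le_sup (f := id) hC

lemma part_not_subset_union {𝒞 : Finset (Finset (ℤ × ℤ))} {D X Y Z : Finset (ℤ × ℤ)}
    (hpart : IsPartition 𝒞 D) (hX : X ∈ 𝒞) (hY : Y ∈ 𝒞) (hZ : Z ∈ 𝒞)
    (hXY : X ≠ Y) (hXZ : X ≠ Z) : ¬ X ⊆ Y ∪ Z := by
  intro hsub
  obtain ⟨x, hx⟩ := hpart.1 X hX
  rcases Finset.mem_union.mp (hsub hx) with h | h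
  · exact Finset.disjoint_left.mp (hpart.2.1 X hX Y hY hXY) hx h
  · exact Finset.disjoint_left.mp (hpart.2.1 X hX Z hZ hXZ) hx h

lemma part_ne_union {𝒞 : Finset (Finset (ℤ × ℤ))} {D X Y Z : Finset (ℤ × ℤ)}
    (hpart : IsPartition 𝒞 D) (hX : X ∈ 𝒞) (hY : Y ∈ 𝒞) (hZ : Z ∈ 𝒞)
    (hYZ : Y ≠ Z) : X ≠ Y ∪ Z := by
  intro h
  by_cases hXY : X = Y
  · subst hXY
    have hZX : Z ⊆ X := h ▸ Finset.subset_union_right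
    obtain ⟨z, hz⟩ := hpart.1 Z hZ
    exact Finset.disjoint_left.mp (hpart.2.1 X hX Z hZ hYZ) (hZX hz) hz
  · by_cases hXZ : X = Z
    · subst hXZ
      have hYX : Y ⊆ X := h ▸ Finset.subset_union_left
      obtain ⟨y, hy⟩ := hpart.1 Y hY
      exact Finset.disjoint_left.mp (hpart.2.1 X hX Y hY hXY) (hYX hy) hy
    · exact part_not_subset_union hpart hX hY hZ hXY hXZ (h ▸ Finset.Subset.refl X)

lemma isPartition_step {𝒞 𝒞' : Finset (Finset (ℤ × ℤ))} {D : Finset (ℤ × ℤ)}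
    (hpart : IsPartition 𝒞 D) (hstep : MergeStep ts α τ 𝒞 𝒞') :
    IsPartition 𝒞' D := by
  obtain ⟨C₁, h1, C₂, h2, hne, _, rfl⟩ := hstep
  obtain ⟨hnon, hdis, hsup⟩ := hpart
  refine ⟨?_, ?_, ?_⟩
  · intro C hC
    rcases Finset.mem_insert.mp hC with rfl | hC
    · exact (hnon C₁ h1).mono Finset.subset_union_left
    · exact hnon C (Finset.mem_of_mem_erase (Finset.mem_of_mem_erase hC))
  · intro X hX Y hY hXY
    rcases Finset.mem_insert.mp hX with rfl | hX <;> rcases Finset.mem_insert.mp hY with h | hY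
    · exact absurd h.symm hXY
    · have hY2 : Y ≠ C₂ := (Finset.mem_erase.mp hY).1
      have hY1 : Y ≠ C₁ := (Finset.mem_erase.mp (Finset.mem_of_mem_erase hY)).1
      have hYm : Y ∈ 𝒞 := Finset.mem_of_mem_erase (Finset.mem_of_mem_erase hY)
      rw [Finset.disjoint_union_left]
      exact ⟨(hdis Y hYm C₁ h1 hY1).symm, (hdis Y hYm C₂ h2 hY2).symm⟩
    · subst h
      have hX2 : X ≠ C₂ := (Finset.mem_erase.mp hX).1
      have hX1 : X ≠ C₁ := (Finset.mem_erase.mp (Finset.mem_of_mem_erase hX)).1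
      have hXm : X ∈ 𝒞 := Finset.mem_of_mem_erase (Finset.mem_of_mem_erase hX)
      rw [Finset.disjoint_union_right]
      exact ⟨hdis X hXm C₁ h1 hX1, hdis X hXm C₂ h2 hX2⟩
    · have hXm : X ∈ 𝒞 := Finset.mem_of_mem_erase (Finset.mem_of_mem_erase hX)
      have hYm : Y ∈ 𝒞 := Finset.mem_of_mem_erase (Finset.mem_of_mem_erase hY)
      exact hdis X hXm Y hYm hXY
  · apply le_antisymm
    · apply Finset.sup_le
      intro C hC
      rcases Finset.mem_insert.mp hC with rfl | hC
      · exact Finset.union_subset (hsup ▸ Finset.le_sup (f := id) h1)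
          (hsup ▸ Finset.le_sup (f := id) h2)
      · exact hsup ▸ Finset.le_sup (f := id)
          (Finset.mem_of_mem_erase (Finset.mem_of_mem_erase hC))
    · rw [← hsup]
      apply Finset.sup_le
      intro C hC
      by_cases hC1 : C = C₁
      · subst hC1
        exact le_trans Finset.subset_union_left
          (Finset.le_sup (f := id) (Finset.mem_insert_self _ _))
      · by_cases hC2 : C = C₂
        · subst hC2
          exact le_trans Finset.subset_union_right
            (Finset.le_sup (f := id) (Finset.mem_insert_self _ _))
        · exact Finset.le_sup (f := id) (Finset.mem_insert_of_mem
            (Finset.mem_erase.mpr ⟨hC2, Finset.mem_erase.mpr ⟨hC1, hC⟩⟩))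

lemma mergeStep_card {𝒞 𝒞' : Finset (Finset (ℤ × ℤ))} (h : MergeStep ts α τ 𝒞 𝒞') :
    𝒞'.card < 𝒞.card := by
  obtain ⟨C₁, h1, C₂, h2, hne, _, rfl⟩ := h
  have h2' : C₂ ∈ 𝒞.erase C₁ := Finset.mem_erase.mpr ⟨hne.symm, h2⟩
  have hcard2 : 2 ≤ 𝒞.card := Finset.one_lt_card.mpr ⟨C₁, h1, C₂, h2, hne⟩
  calc (insert (C₁ ∪ C₂) ((𝒞.erase C₁).erase C₂)).card
      ≤ ((𝒞.erase C₁).erase C₂).card + 1 := Finset.card_insert_le _ _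
    _ = 𝒞.card - 1 - 1 + 1 := by
        rw [Finset.card_erase_of_mem h2', Finset.card_erase_of_mem h1]
    _ < 𝒞.card := by omega

lemma partsProducible_step {𝒞 𝒞' : Finset (Finset (ℤ × ℤ))} {D : Finset (ℤ × ℤ)}
    (hD : IsDom α D) (hpart : IsPartition 𝒞 D)
    (hstep : MergeStep ts α τ 𝒞 𝒞')
    (hP : ∀ C ∈ 𝒞, Producible ts τ (restr α C)) :
    ∀ C ∈ 𝒞', Producible ts τ (restr α C) := by
  obtain ⟨C₁, h1, C₂, h2, hne, hstr, rfl⟩ := hstep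
  intro C hC
  rcases Finset.mem_insert.mp hC with rfl | hC
  · have hdisj : Disjoint C₁ C₂ := hpart.2.1 C₁ h1 C₂ h2 hne
    have hs1 : C₁ ⊆ D := part_subset hpart h1
    have hs2 : C₂ ⊆ D := part_subset hpart h2
    rw [← aunion_restr]
    have hag : ∀ p ∈ C₁ ∪ C₂, α p = restr α (C₁ ∪ C₂) p := by
      intro p hp
      unfold restr
      rw [if_pos hp]
    have hstr' : τ ≤ strengthBetween ts (aunion (restr α C₁) (restr α C₂)) C₁ C₂ := by
      rw [aunion_restr]
      calc τ ≤ strengthBetween ts α C₁ C₂ := hstr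
        _ = strengthBetween ts (restr α (C₁ ∪ C₂)) C₁ C₂ := strengthBetween_congr ts α hag
    exact Producible.union (hP C₁ h1) (hP C₂ h2) (restr_disjoint α hdisj)
      (stable_aunion ts τ (isDom_restr α hD hs1) (isDom_restr α hD hs2)
        (restr_disjoint α hdisj)
        (producible_stable ts τ (hP C₁ h1)) (producible_stable ts τ (hP C₂ h2)) hstr')
  · exact hP C (Finset.mem_of_mem_erase (Finset.mem_of_mem_erase hC))

lemma singletonsPart_isPartition (D : Finset (ℤ × ℤ)) : IsPartition (singletonsPart D) D := by
  refine ⟨?_, ?_, ?_⟩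
  · intro C hC
    obtain ⟨p, _, rfl⟩ := Finset.mem_image.mp hC
    exact ⟨p, Finset.mem_singleton_self p⟩
  · intro X hX Y hY hXY
    obtain ⟨p, _, rfl⟩ := Finset.mem_image.mp hX
    obtain ⟨q, _, rfl⟩ := Finset.mem_image.mp hY
    rw [Finset.disjoint_singleton]
    exact fun h => hXY (by rw [h])
  · apply le_antisymm
    · apply Finset.sup_le
      intro C hC
      obtain ⟨p, hp, rfl⟩ := Finset.mem_image.mp hC
      simpa using hp
    · intro p hp
      have hmem : ({p} : Finset (ℤ × ℤ)) ∈ singletonsPart D := Finset.mem_image_of_mem _ hp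
      exact (Finset.le_sup (f := id) hmem) (Finset.mem_singleton_self p)

lemma producible_exists_dom {β : Assembly T} (h : Producible ts τ β) :
    ∃ E : Finset (ℤ × ℤ), IsDom β E := by
  induction h with
  | single p t => exact ⟨{p}, isDom_single p t⟩
  | union _ _ _ _ ihβ ihγ =>
    obtain ⟨Eβ, hβ⟩ := ihβ
    obtain ⟨Eγ, hγ⟩ := ihγ
    exact ⟨Eβ ∪ Eγ, isDom_aunion hβ hγ⟩

lemma producible_some {β : Assembly T} (h : Producible ts τ β) :
    ∃ p t, β p = some t := by
  induction h with
  | single p t => exact ⟨p, t, if_pos rfl⟩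
  | union _ _ _ _ ihβ _ =>
    obtain ⟨p, t, hp⟩ := ihβ
    exact ⟨p, t, by simp [aunion, hp]⟩

lemma reach_lift {β : Assembly T} {Eβ : Finset (ℤ × ℤ)}
    (hag : ∀ p ∈ Eβ, α p = β p)
    (𝒮 : Finset (Finset (ℤ × ℤ))) (h𝒮 : ∀ X ∈ 𝒮, ∀ p ∈ X, p ∉ Eβ) :
    ∀ {Pc 𝒬 : Finset (Finset (ℤ × ℤ))},
      Relation.ReflTransGen (MergeStep ts β τ) Pc 𝒬 → IsPartition Pc Eβ →
      Relation.ReflTransGen (MergeStep ts α τ) (Pc ∪ 𝒮) (𝒬 ∪ 𝒮) := by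
  intro Pc 𝒬 h
  induction h using Relation.ReflTransGen.head_induction_on with
  | refl => exact fun _ => .refl
  | head hstep hrest ih =>
    rename_i P0 P1
    intro hpart
    obtain ⟨C₁, h1, C₂, h2, hne, hstr, rfl⟩ := hstep
    have hnotS : ∀ {C : Finset (ℤ × ℤ)}, C ∈ P0 → C ∉ 𝒮 := by
      intro C hC hCS
      obtain ⟨x, hx⟩ := hpart.1 C hC
      exact h𝒮 C hCS x hx (part_subset hpart hC hx)
    have hs1 : C₁ ⊆ Eβ := part_subset hpart h1
    have hs2 : C₂ ⊆ Eβ := part_subset hpart h2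
    have step' : MergeStep ts α τ (P0 ∪ 𝒮)
        (insert (C₁ ∪ C₂) ((P0.erase C₁).erase C₂) ∪ 𝒮) := by
      refine ⟨C₁, Finset.mem_union_left _ h1, C₂, Finset.mem_union_left _ h2, hne, ?_, ?_⟩
      · calc τ ≤ strengthBetween ts β C₁ C₂ := hstr
          _ = strengthBetween ts α C₁ C₂ := by
            refine (strengthBetween_congr ts α fun p hp => ?_).symm
            rcases Finset.mem_union.mp hp with h | h
            · exact hag p (hs1 h)
            · exact hag p (hs2 h)
      · ext x
        have hx1 : x ∈ 𝒮 → x ≠ C₁ := fun hx h => hnotS h1 (h ▸ hx)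
        have hx2 : x ∈ 𝒮 → x ≠ C₂ := fun hx h => hnotS h2 (h ▸ hx)
        simp only [Finset.mem_union, Finset.mem_insert, Finset.mem_erase]
        tauto
    exact .head step' (ih (isPartition_step ts β τ hpart ⟨C₁, h1, C₂, h2, hne, hstr, rfl⟩))

lemma producible_reach {β : Assembly T} (h : Producible ts τ β) :
    ∀ E : Finset (ℤ × ℤ), IsDom β E →
      Relation.ReflTransGen (MergeStep ts β τ) (singletonsPart E) {E} := by
  induction h with
  | single p t =>
    intro E hE
    have hE' : E = {p} := isDom_unique hE (isDom_single p t)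
    subst hE'
    have hsp : singletonsPart {p} = {({p} : Finset (ℤ × ℤ))} := by
      unfold singletonsPart
      rw [Finset.image_singleton]
    rw [hsp]
  | union hpβ hpγ hdis hstab ihβ ihγ =>
    rename_i β' γ'
    intro E hE
    obtain ⟨Eβ, hEβ⟩ := producible_exists_dom ts τ hpβ
    obtain ⟨Eγ, hEγ⟩ := producible_exists_dom ts τ hpγ
    have hE' : E = Eβ ∪ Eγ := isDom_unique hE (isDom_aunion hEβ hEγ)
    subst hE'
    have hdisE : Disjoint Eβ Eγ := by
      rw [Finset.disjoint_left]
      intro p hpb hpg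
      have h1 : (β' p).isSome := (hEβ p).mpr hpb
      have h2 : (γ' p).isSome := (hEγ p).mpr hpg
      rcases hdis p with h | h
      · rw [h] at h1; simp at h1
      · rw [h] at h2; simp at h2
    have hagβ : ∀ p ∈ Eβ, aunion β' γ' p = β' p := by
      intro p hp
      obtain ⟨t, ht⟩ := Option.isSome_iff_exists.mp ((hEβ p).mpr hp)
      simp [aunion, ht]
    have hagγ : ∀ p ∈ Eγ, aunion β' γ' p = γ' p := by
      intro p hp
      have hg : (γ' p).isSome := (hEγ p).mpr hp
      rcases hdis p with hb | hb
      · simp [aunion, hb]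
      · rw [hb] at hg; simp at hg
    have hβne : Eβ.Nonempty := by
      obtain ⟨p, t, hp⟩ := producible_some ts τ hpβ
      exact ⟨p, (hEβ p).mp (by simp [hp])⟩
    have hγne : Eγ.Nonempty := by
      obtain ⟨p, t, hp⟩ := producible_some ts τ hpγ
      exact ⟨p, (hEγ p).mp (by simp [hp])⟩
    have hEβγ : Eβ ≠ Eγ := by
      intro h
      obtain ⟨p, hp⟩ := hβne
      exact Finset.disjoint_left.mp hdisE hp (h ▸ hp)
    have s1 : Relation.ReflTransGen (MergeStep ts (aunion β' γ') τ)
        (singletonsPart Eβ ∪ singletonsPart Eγ) ({Eβ} ∪ singletonsPart Eγ) :=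
      reach_lift ts (aunion β' γ') τ hagβ (singletonsPart Eγ)
        (fun X hX p hp hpEβ => by
          obtain ⟨q, hq, rfl⟩ := Finset.mem_image.mp hX
          rw [Finset.mem_singleton] at hp
          subst hp
          exact Finset.disjoint_left.mp hdisE hpEβ hq)
        (ihβ Eβ hEβ) (singletonsPart_isPartition Eβ)
    have s2 : Relation.ReflTransGen (MergeStep ts (aunion β' γ') τ)
        ({Eβ} ∪ singletonsPart Eγ) ({Eβ} ∪ {Eγ}) := by
      rw [Finset.union_comm {Eβ} (singletonsPart Eγ), Finset.union_comm {Eβ} {Eγ}]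
      exact reach_lift ts (aunion β' γ') τ hagγ {Eβ}
        (fun X hX p hp hpEγ => by
          rw [Finset.mem_singleton] at hX
          subst hX
          exact Finset.disjoint_left.mp hdisE hp hpEγ)
        (ihγ Eγ hEγ) (singletonsPart_isPartition Eγ)
    have s3 : MergeStep ts (aunion β' γ') τ ({Eβ} ∪ {Eγ}) {Eβ ∪ Eγ} := by
      refine ⟨Eβ, Finset.mem_union_left _ (Finset.mem_singleton_self _),
        Eγ, Finset.mem_union_right _ (Finset.mem_singleton_self _), hEβγ, ?_, ?_⟩
      · exact hstab (Eβ ∪ Eγ) Eβ Eγ (isDom_aunion hEβ hEγ) rfl hdisE hβne hγne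
      · ext x
        simp only [Finset.mem_singleton, Finset.mem_insert, Finset.mem_erase,
          Finset.mem_union]
        tauto
    have hsp : singletonsPart (Eβ ∪ Eγ) = singletonsPart Eβ ∪ singletonsPart Eγ :=
      Finset.image_union _ _
    rw [hsp]
    exact s1.trans (s2.trans (Relation.ReflTransGen.single s3))

lemma reach_producible {D : Finset (ℤ × ℤ)} (hD : IsDom α D)
    (h : Relation.ReflTransGen (MergeStep ts α τ) (singletonsPart D) {D}) :
    Producible ts τ α := by
  have key : ∀ {Pc 𝒬 : Finset (Finset (ℤ × ℤ))},
      Relation.ReflTransGen (MergeStep ts α τ) Pc 𝒬 →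
      IsPartition Pc D → (∀ C ∈ Pc, Producible ts τ (restr α C)) →
      IsPartition 𝒬 D ∧ (∀ C ∈ 𝒬, Producible ts τ (restr α C)) := by
    intro Pc 𝒬 h
    induction h with
    | refl => exact fun h1 h2 => ⟨h1, h2⟩
    | tail _ hbc ih =>
      intro h1 h2
      obtain ⟨hp, hq⟩ := ih h1 h2
      exact ⟨isPartition_step ts α τ hp hbc, partsProducible_step ts α τ hD hp hbc hq⟩
  have init : ∀ C ∈ singletonsPart D, Producible ts τ (restr α C) := by
    intro C hC
    obtain ⟨p, hp, rfl⟩ := Finset.mem_image.mp hC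
    obtain ⟨t, ht⟩ := Option.isSome_iff_exists.mp ((hD p).mpr hp)
    have : restr α {p} = fun q => if q = p then some t else none := by
      funext q
      unfold restr
      by_cases hq : q = p
      · subst hq; simp [ht]
      · simp [hq]
    rw [this]
    exact Producible.single p t
  have final := (key h (singletonsPart_isPartition D) init).2 D (Finset.mem_singleton_self D)
  have : restr α D = α := by
    funext p
    unfold restr
    by_cases hp : p ∈ D
    · rw [if_pos hp]
    · rw [if_neg hp]
      exact (Option.not_isSome_iff_eq_none.mp (fun hs => hp ((hD p).mp hs))).symm
  rwa [this] at final

lemma core1 {𝒞 : Finset (Finset (ℤ × ℤ))} {D B₁ C₁ M : Finset (ℤ × ℤ)}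
    (hpart : IsPartition 𝒞 D)
    (hB : B₁ ∈ 𝒞) (hC : C₁ ∈ 𝒞) (hM : M ∈ 𝒞)
    (hBC : B₁ ≠ C₁) (hBM : B₁ ≠ M) (hCM : C₁ ≠ M)
    (hsB : τ ≤ strengthBetween ts α B₁ M) (hsC : τ ≤ strengthBetween ts α C₁ M) :
    ∃ ℰ, MergeStep ts α τ (mop B₁ M 𝒞) ℰ ∧ MergeStep ts α τ (mop C₁ M 𝒞) ℰ := by
  have f1 : ∀ x ∈ 𝒞, x ≠ B₁ ∪ M := fun x hx => part_ne_union hpart hx hB hM hBM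
  have f2 : ∀ x ∈ 𝒞, x ≠ C₁ ∪ M := fun x hx => part_ne_union hpart hx hC hM hCM
  have hCBM : ¬ C₁ ⊆ B₁ ∪ M := part_not_subset_union hpart hC hB hM hBC.symm hCM
  have hBCM : ¬ B₁ ⊆ C₁ ∪ M := part_not_subset_union hpart hB hC hM hBC hBM
  have f3 : B₁ ∪ M ≠ C₁ ∪ (B₁ ∪ M) := fun h =>
    hCBM (by rw [h]; exact Finset.subset_union_left)
  have f4 : C₁ ∪ M ≠ B₁ ∪ (C₁ ∪ M) := fun h =>
    hBCM (by rw [h]; exact Finset.subset_union_left)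
  have f5 : B₁ ∪ M ≠ C₁ ∪ M := fun h =>
    hCBM (by rw [h]; exact Finset.subset_union_left)
  have EU : C₁ ∪ (B₁ ∪ M) = B₁ ∪ (C₁ ∪ M) := by
    rw [Finset.union_left_comm]
  refine ⟨mop C₁ (B₁ ∪ M) (mop B₁ M 𝒞), ?_, ?_⟩
  · refine ⟨C₁, ?_, B₁ ∪ M, Finset.mem_insert_self _ _,
      part_ne_union hpart hC hB hM hBM, ?_, rfl⟩
    · exact Finset.mem_insert_of_mem (Finset.mem_erase.mpr ⟨hCM,
        Finset.mem_erase.mpr ⟨hBC.symm, hC⟩⟩)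
    · exact le_trans hsC (strengthBetween_mono ts α (Finset.Subset.refl _)
        Finset.subset_union_right)
  · refine ⟨B₁, ?_, C₁ ∪ M, Finset.mem_insert_self _ _,
      part_ne_union hpart hB hC hM hCM, ?_, ?_⟩
    · exact Finset.mem_insert_of_mem (Finset.mem_erase.mpr ⟨hBM,
        Finset.mem_erase.mpr ⟨hBC, hB⟩⟩)
    · exact le_trans hsB (strengthBetween_mono ts α (Finset.Subset.refl _)
        Finset.subset_union_right)
    · show mop C₁ (B₁ ∪ M) (mop B₁ M 𝒞) = mop B₁ (C₁ ∪ M) (mop C₁ M 𝒞)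
      ext x
      have g1 : x ∈ 𝒞 → x ≠ B₁ ∪ M := f1 x
      have g2 : x ∈ 𝒞 → x ≠ C₁ ∪ M := f2 x
      simp only [mop, Finset.mem_insert, Finset.mem_erase]
      rw [EU]
      tauto
  
lemma core2 {𝒞 : Finset (Finset (ℤ × ℤ))} {D B₁ B₂ C₁ C₂ : Finset (ℤ × ℤ)}
    (hpart : IsPartition 𝒞 D)
    (hB₁ : B₁ ∈ 𝒞) (hB₂ : B₂ ∈ 𝒞) (hC₁ : C₁ ∈ 𝒞) (hC₂ : C₂ ∈ 𝒞)
    (hBne : B₁ ≠ B₂) (hCne : C₁ ≠ C₂)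
    (h11 : B₁ ≠ C₁) (h12 : B₁ ≠ C₂) (h21 : B₂ ≠ C₁) (h22 : B₂ ≠ C₂)
    (hsB : τ ≤ strengthBetween ts α B₁ B₂) (hsC : τ ≤ strengthBetween ts α C₁ C₂) :
    ∃ ℰ, MergeStep ts α τ (mop B₁ B₂ 𝒞) ℰ ∧ MergeStep ts α τ (mop C₁ C₂ 𝒞) ℰ := by
  have f1 : ∀ x ∈ 𝒞, x ≠ B₁ ∪ B₂ := fun x hx => part_ne_union hpart hx hB₁ hB₂ hBne
  have f2 : ∀ x ∈ 𝒞, x ≠ C₁ ∪ C₂ := fun x hx => part_ne_union hpart hx hC₁ hC₂ hCne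
  have g1 : C₁ ∪ C₂ ≠ B₁ ∪ B₂ := fun h =>
    part_not_subset_union hpart hC₁ hB₁ hB₂ h11.symm h21.symm
      (by rw [← h]; exact Finset.subset_union_left)
  refine ⟨mop C₁ C₂ (mop B₁ B₂ 𝒞), ?_, ?_⟩
  · refine ⟨C₁, ?_, C₂, ?_, hCne, hsC, rfl⟩
    · exact Finset.mem_insert_of_mem (Finset.mem_erase.mpr ⟨h21.symm,
        Finset.mem_erase.mpr ⟨h11.symm, hC₁⟩⟩)
    · exact Finset.mem_insert_of_mem (Finset.mem_erase.mpr ⟨h22.symm,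
        Finset.mem_erase.mpr ⟨h12.symm, hC₂⟩⟩)
  · refine ⟨B₁, ?_, B₂, ?_, hBne, hsB, ?_⟩
    · exact Finset.mem_insert_of_mem (Finset.mem_erase.mpr ⟨h12,
        Finset.mem_erase.mpr ⟨h11, hB₁⟩⟩)
    · exact Finset.mem_insert_of_mem (Finset.mem_erase.mpr ⟨h22,
        Finset.mem_erase.mpr ⟨h21, hB₂⟩⟩)
    · show mop C₁ C₂ (mop B₁ B₂ 𝒞) = mop B₁ B₂ (mop C₁ C₂ 𝒞)
      ext x
      have k1 : x ∈ 𝒞 → x ≠ B₁ ∪ B₂ := f1 x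
      have k2 : x ∈ 𝒞 → x ≠ C₁ ∪ C₂ := f2 x
      have hc1 : C₁ ≠ B₁ ∪ B₂ := f1 C₁ hC₁
      have hc2 : C₂ ≠ B₁ ∪ B₂ := f1 C₂ hC₂
      have hb1 : B₁ ≠ C₁ ∪ C₂ := f2 B₁ hB₁
      have hb2 : B₂ ≠ C₁ ∪ C₂ := f2 B₂ hB₂
      have g2 : B₁ ∪ B₂ ≠ C₁ ∪ C₂ := fun h => g1 h.symm
      simp only [mop, Finset.mem_insert, Finset.mem_erase]
      constructor
      · rintro (rfl | ⟨h2, h1, (rfl | ⟨h4, h3, hx⟩)⟩)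
        · exact Or.inr ⟨Ne.symm hb2, Ne.symm hb1, Or.inl rfl⟩
        · exact Or.inl rfl
        · exact Or.inr ⟨h4, h3, Or.inr ⟨h2, h1, hx⟩⟩
      · rintro (rfl | ⟨h2, h1, (rfl | ⟨h4, h3, hx⟩)⟩)
        · exact Or.inr ⟨Ne.symm hc2, Ne.symm hc1, Or.inl rfl⟩
        · exact Or.inl rfl
        · exact Or.inr ⟨h4, h3, Or.inr ⟨h2, h1, hx⟩⟩

lemma diamond {𝒞 𝒟 𝒞' : Finset (Finset (ℤ × ℤ))} {D : Finset (ℤ × ℤ)}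
    (hpart : IsPartition 𝒞 D)
    (hd : MergeStep ts α τ 𝒞 𝒟) (hc : MergeStep ts α τ 𝒞 𝒞') :
    𝒟 = 𝒞' ∨ ∃ ℰ, MergeStep ts α τ 𝒟 ℰ ∧ MergeStep ts α τ 𝒞' ℰ := by
  obtain ⟨B₁, hB₁, B₂, hB₂, hBne, hsB, rfl⟩ := hd
  obtain ⟨C₁, hC₁, C₂, hC₂, hCne, hsC, rfl⟩ := hc
  show mop B₁ B₂ 𝒞 = mop C₁ C₂ 𝒞 ∨
    ∃ ℰ, MergeStep ts α τ (mop B₁ B₂ 𝒞) ℰ ∧ MergeStep ts α τ (mop C₁ C₂ 𝒞) ℰ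
  by_cases e11 : B₁ = C₁
  · subst e11
    by_cases e22 : B₂ = C₂
    · subst e22; exact Or.inl rfl
    · -- common part is B₁ (= C₁)
      right
      rw [mop_swap B₁ B₂ 𝒞, mop_swap B₁ C₂ 𝒞]
      exact core1 ts α τ hpart hB₂ hC₂ hB₁ e22 hBne.symm hCne.symm
        (by rw [strengthBetween_comm ts α B₂ B₁]; exact hsB)
        (by rw [strengthBetween_comm ts α C₂ B₁]; exact hsC)
  · by_cases e12 : B₁ = C₂
    · subst e12
      by_cases e21 : B₂ = C₁
      · subst e21
        left
        rw [mop_swap]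
      · -- common part is B₁ (= C₂)
        right
        rw [mop_swap B₁ B₂ 𝒞]
        exact core1 ts α τ hpart hB₂ hC₁ hB₁ e21 hBne.symm hCne
          (by rw [strengthBetween_comm ts α B₂ B₁]; exact hsB)
          hsC
    · by_cases e22 : B₂ = C₂
      · subst e22
        right
        exact core1 ts α τ hpart hB₁ hC₁ hB₂ e11 hBne hCne hsB hsC
      · by_cases e21 : B₂ = C₁
        · subst e21
          right
          rw [mop_swap B₂ C₂ 𝒞]
          exact core1 ts α τ hpart hB₁ hC₂ hB₂ e12 hBne hCne.symm hsB
            (by rw [strengthBetween_comm ts α C₂ B₂]; exact hsC)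
        · right
          exact core2 ts α τ hpart hB₁ hB₂ hC₁ hC₂ hBne hCne e11 e12 e21 e22 hsB hsC

lemma confluence {D : Finset (ℤ × ℤ)} :
    ∀ {Pc : Finset (Finset (ℤ × ℤ))},
      Relation.ReflTransGen (MergeStep ts α τ) Pc {D} →
      IsPartition Pc D → ∀ {Pc' : Finset (Finset (ℤ × ℤ))}, MergeStep ts α τ Pc Pc' →
      Relation.ReflTransGen (MergeStep ts α τ) Pc' {D} := by
  intro Pc h
  induction h using Relation.ReflTransGen.head_induction_on with
  | refl =>
    intro _ Pc' h'
    obtain ⟨C₁, h1, C₂, h2, hne, _, _⟩ := h'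
    rw [Finset.mem_singleton] at h1 h2
    exact absurd (h1.trans h2.symm) hne
  | head hab hbd ih =>
    intro hpart Pc' h'
    rcases diamond ts α τ hpart hab h' with heq | ⟨ℰ, hDE, hCE⟩
    · exact heq ▸ hbd
    · exact .head hCE (ih (isPartition_step ts α τ hpart hab) hDE)

lemma isPartition_rtg {D : Finset (ℤ × ℤ)} {Pc 𝒬 : Finset (Finset (ℤ × ℤ))}
    (hpart : IsPartition Pc D) (h : Relation.ReflTransGen (MergeStep ts α τ) Pc 𝒬) :
    IsPartition 𝒬 D := by
  induction h with
  | refl => exact hpart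
  | tail _ hbc ih => exact isPartition_step ts α τ ih hbc

lemma reach_transport {D : Finset (ℤ × ℤ)} {Pc 𝒬 : Finset (Finset (ℤ × ℤ))}
    (hpart : IsPartition Pc D)
    (hPD : Relation.ReflTransGen (MergeStep ts α τ) Pc {D})
    (h : Relation.ReflTransGen (MergeStep ts α τ) Pc 𝒬) :
    Relation.ReflTransGen (MergeStep ts α τ) 𝒬 {D} := by
  induction h with
  | refl => exact hPD
  | tail hab hbc ih =>
    exact confluence ts α τ ih (isPartition_rtg ts α τ hpart hab) hbc

lemma exists_maximal (𝒞 : Finset (Finset (ℤ × ℤ))) :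
    ∃ 𝒬, Relation.ReflTransGen (MergeStep ts α τ) 𝒞 𝒬 ∧
      ∀ R, ¬ MergeStep ts α τ 𝒬 R := by
  generalize hn : 𝒞.card = n
  induction n using Nat.strong_induction_on generalizing 𝒞 with
  | _ n ih =>
    by_cases h : ∃ R, MergeStep ts α τ 𝒞 R
    · obtain ⟨R, hR⟩ := h
      obtain ⟨𝒬, hreach, hmax⟩ := ih R.card (hn ▸ mergeStep_card ts α τ hR) R rfl
      exact ⟨𝒬, .head hR hreach, hmax⟩
    · exact ⟨𝒞, .refl, fun R hR => h ⟨R, hR⟩⟩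

lemma rtg_of_list {σ : Type} {r : σ → σ → Prop} {a b : σ} {L : List σ}
    (h1 : L.head? = some a) (h2 : L.getLast? = some b) (h3 : L.Chain' r) :
    Relation.ReflTransGen r a b := by
  cases L with
  | nil => simp at h1
  | cons x l =>
    have hx : x = a := by simpa using h1
    subst hx
    have hlast : (x :: l).getLast (List.cons_ne_nil x l) = b := by
      rw [List.getLast?_eq_getLast (List.cons_ne_nil x l)] at h2
      exact Option.some_injective _ h2
    exact List.relationReflTransGen_of_exists_isChain_cons l h3 hlast

lemma list_of_rtg {σ : Type} {r : σ → σ → Prop} {a b : σ}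
    (h : Relation.ReflTransGen r a b) :
    ∃ L : List σ, L.head? = some a ∧ L.Chain' r ∧ L.getLast? = some b := by
  obtain ⟨l, hc, hl⟩ := List.exists_isChain_cons_of_relationReflTransGen h
  exact ⟨a :: l, rfl, hc,
    by rw [List.getLast?_eq_getLast (List.cons_ne_nil a l), hl]⟩

end MergeProofs

/-- The following are equivalent: (1) `α` is producible at
temperature `τ` in the hierarchical model; (2) some merge sequence ends with the
partition `{dom α}`; (3) every maximal merge sequence ends with `{dom α}`. -/
theorem producible_iff_merge_sequences {T : Type} [Fintype T] (ts : TileSystem T)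
    (τ : ℕ) (hτ : 0 < τ) (α : Assembly T)
    (D : Finset (ℤ × ℤ)) (hD : IsDom α D) (hne : D.Nonempty) :
    (Producible ts τ α ↔
      ∃ L : List (Finset (Finset (ℤ × ℤ))),
        IsMergeSeq ts α τ D L ∧ L.getLast? = some {D}) ∧
    (Producible ts τ α ↔
      ∀ (L : List (Finset (Finset (ℤ × ℤ)))) (𝒞 : Finset (Finset (ℤ × ℤ))),
        IsMergeSeq ts α τ D L → L.getLast? = some 𝒞 →
        (∀ 𝒞', ¬ MergeStep ts α τ 𝒞 𝒞') → 𝒞 = {D}) := by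
  have hpart0 : IsPartition (singletonsPart D) D := singletonsPart_isPartition D
  have fwd : Producible ts τ α →
      Relation.ReflTransGen (MergeStep ts α τ) (singletonsPart D) {D} :=
    fun h => producible_reach ts τ h D hD
  have bwd : Relation.ReflTransGen (MergeStep ts α τ) (singletonsPart D) {D} →
      Producible ts τ α :=
    fun h => reach_producible ts α τ hD h
  constructor
  · constructor
    · intro hp
      obtain ⟨L, hh, hc, hl⟩ := list_of_rtg (fwd hp)
      exact ⟨L, ⟨hh, hc⟩, hl⟩
    · rintro ⟨L, ⟨hh, hc⟩, hl⟩
      exact bwd (rtg_of_list hh hl hc)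
  · constructor
    · intro hp L 𝒞 hseq hlast hmax
      have h1 := rtg_of_list hseq.1 hlast hseq.2
      have h2 := reach_transport ts α τ hpart0 (fwd hp) h1
      rcases Relation.ReflTransGen.cases_head h2 with h | ⟨c, hc, _⟩
      · exact h
      · exact absurd hc (hmax c)
    · intro h3
      obtain ⟨𝒬, hreach, hmax⟩ := exists_maximal ts α τ (singletonsPart D)
      obtain ⟨L, hh, hc, hl⟩ := list_of_rtg hreach
      have hQ : 𝒬 = {D} := h3 L 𝒬 ⟨hh, hc⟩ hl hmax
      exact bwd (hQ ▸ hreach)
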